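/- Let R_{2,i} denote the second antiderivative of the Haar wavelet ψ_i (with i = 2^j + k + 1, i ≥ 2), i.e., R_{2,i}(x) = ∫₀^x ∫₀^s ψ_i(r) dr ds, given explicitly by R_{2,i}(x) = (1/2)[(x−ζ₁)₊² − 2(x−ζ₂)₊² + (x−ζ₃)₊²] where y₊ = max(y,0) and ζ₁ = k/2^j, ζ₂ = (k+1/2)/2^j, ζ₃ = (k+1)/2^j. Then |R_{2,i}(x)| ≤ (8/3)·(1/2^{j+1})² for all x ∈ [0,1]. -/

import Mathlib

open Set MeasureTheory intervalIntegral

/-- The Haar wavelet ψ_i on [0,1), indexed by i = 2^j + k + 1 with 0 ≤ k < 2^j. -/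
noncomputable def haarW (j k : ℕ) (x : ℝ) : ℝ :=
  if (k : ℝ) / 2 ^ j ≤ x ∧ x < ((k : ℝ) + 1 / 2) / 2 ^ j then 1
  else if ((k : ℝ) + 1 / 2) / 2 ^ j ≤ x ∧ x < ((k : ℝ) + 1) / 2 ^ j then -1
  else 0

/-- Explicit formula for the second repeated antiderivative of ψ_i. -/
noncomputable def haarR2 (j k : ℕ) (x : ℝ) : ℝ :=
  (1 / 2) * ((max (x - (k : ℝ) / 2 ^ j) 0) ^ 2
    - 2 * (max (x - ((k : ℝ) + 1 / 2) / 2 ^ j) 0) ^ 2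
    + (max (x - ((k : ℝ) + 1) / 2 ^ j) 0) ^ 2)

/-- First antiderivative of the Haar wavelet. -/
noncomputable def haarR1 (j k : ℕ) (s : ℝ) : ℝ :=
  max (s - (k : ℝ) / 2 ^ j) 0 - 2 * max (s - ((k : ℝ) + 1 / 2) / 2 ^ j) 0
    + max (s - ((k : ℝ) + 1) / 2 ^ j) 0

lemma max_sub_hasDerivWithinAt (c t : ℝ) :
    HasDerivWithinAt (fun s => max (s - c) 0) (if c ≤ t then 1 else 0) (Set.Ioi t) t := by
  rcases lt_trichotomy t c with h | h | h
  · rw [if_neg (not_le.mpr h)]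
    have hev : (fun s : ℝ => max (s - c) 0) =ᶠ[nhds t] fun _ => (0 : ℝ) := by
      filter_upwards [Iio_mem_nhds h] with s hs
      simp [max_eq_right (le_of_lt (sub_neg.mpr (Set.mem_Iio.mp hs)))]
    exact ((hasDerivAt_const t (0 : ℝ)).congr_of_eventuallyEq hev).hasDerivWithinAt
  · rw [if_pos h.ge]
    refine (((hasDerivAt_id t).sub_const c).hasDerivWithinAt).congr ?_ ?_
    · intro s hs
      have : c < s := h ▸ Set.mem_Ioi.mp hs
      exact max_eq_left (sub_nonneg.mpr this.le)
    · simp [h]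
  · rw [if_pos h.le]
    have hev : (fun s : ℝ => max (s - c) 0) =ᶠ[nhds t] fun s : ℝ => id s - c := by
      filter_upwards [Ioi_mem_nhds h] with s hs
      exact max_eq_left (sub_nonneg.mpr (le_of_lt (Set.mem_Ioi.mp hs)))
    exact (((hasDerivAt_id t).sub_const c).congr_of_eventuallyEq hev).hasDerivWithinAt

lemma sqMax_hasDerivAt (c x : ℝ) :
    HasDerivAt (fun s => (max (s - c) 0) ^ 2) (2 * max (x - c) 0) x := by
  rcases lt_trichotomy x c with h | h | h
  · have hev : (fun s : ℝ => (max (s - c) 0) ^ 2) =ᶠ[nhds x] fun _ => (0 : ℝ) := by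
      filter_upwards [Iio_mem_nhds h] with s hs
      simp [max_eq_right (le_of_lt (sub_neg.mpr (Set.mem_Iio.mp hs)))]
    have h0 : max (x - c) 0 = 0 := max_eq_right (le_of_lt (sub_neg.mpr h))
    rw [h0, mul_zero]
    exact (hasDerivAt_const x (0 : ℝ)).congr_of_eventuallyEq hev
  · subst h
    have h0 : max (x - x) 0 = 0 := by simp
    rw [h0, mul_zero]
    rw [hasDerivAt_iff_isLittleO]
    rw [Asymptotics.isLittleO_iff]
    intro ε hε
    filter_upwards [Metric.ball_mem_nhds x hε] with s hs
    have hd : |s - x| < ε := by simpa [Real.dist_eq] using hs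
    have hm : (max (s - x) 0) ^ 2 ≤ |s - x| ^ 2 := by
      rcases le_total (s - x) 0 with h' | h'
      · rw [max_eq_right h']
        simpa using sq_nonneg |s - x|
      · rw [max_eq_left h', sq_abs]
    have hfx : (max (x - x) 0 : ℝ) ^ 2 = 0 := by simp
    simp only [hfx, smul_zero, sub_zero, Real.norm_eq_abs]
    rw [abs_of_nonneg (by positivity : (0:ℝ) ≤ (max (s - x) 0) ^ 2)]
    calc (max (s - x) 0) ^ 2 ≤ |s - x| ^ 2 := hm
      _ = |s - x| * |s - x| := by ring
      _ ≤ ε * |s - x| := mul_le_mul_of_nonneg_right hd.le (abs_nonneg _)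
  · have hev : (fun s : ℝ => (max (s - c) 0) ^ 2) =ᶠ[nhds x] fun s => (s - c) ^ 2 := by
      filter_upwards [Ioi_mem_nhds h] with s hs
      rw [max_eq_left (sub_nonneg.mpr (le_of_lt hs))]
    have h0 : max (x - c) 0 = x - c := max_eq_left (sub_nonneg.mpr h.le)
    rw [h0]
    have hb : HasDerivAt (fun s : ℝ => (s - c) ^ 2) (2 * (x - c)) x := by
      have := (((hasDerivAt_id x).sub_const c).pow 2)
      exact this.congr_deriv (by simp [mul_comm])
    exact hb.congr_of_eventuallyEq hev

lemma haarW_eq (j k : ℕ) (t : ℝ) :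
    haarW j k t = (if (k : ℝ) / 2 ^ j ≤ t then 1 else 0)
      - 2 * (if ((k : ℝ) + 1 / 2) / 2 ^ j ≤ t then 1 else 0)
      + (if ((k : ℝ) + 1) / 2 ^ j ≤ t then 1 else 0) := by
  have hp : (0 : ℝ) < 2 ^ j := by positivity
  have h12 : (k : ℝ) / 2 ^ j < ((k : ℝ) + 1 / 2) / 2 ^ j := by
    apply div_lt_div_of_pos_right ?_ hp
    linarith
  have h23 : ((k : ℝ) + 1 / 2) / 2 ^ j < ((k : ℝ) + 1) / 2 ^ j := by
    apply div_lt_div_of_pos_right ?_ hp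
    linarith
  rcases lt_or_ge t ((k : ℝ) / 2 ^ j) with h | h
  · have h2 : t < ((k : ℝ) + 1 / 2) / 2 ^ j := h.trans h12
    have h3 : t < ((k : ℝ) + 1) / 2 ^ j := h2.trans h23
    unfold haarW
    rw [if_neg (fun hc => h.not_ge hc.1), if_neg (fun hc => h2.not_ge hc.1),
      if_neg h.not_ge, if_neg h2.not_ge, if_neg h3.not_ge]
    norm_num
  · rcases lt_or_ge t (((k : ℝ) + 1 / 2) / 2 ^ j) with h2 | h2
    · have h3 : t < ((k : ℝ) + 1) / 2 ^ j := h2.trans h23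
      unfold haarW
      rw [if_pos ⟨h, h2⟩, if_pos h, if_neg h2.not_ge, if_neg h3.not_ge]
      norm_num
    · rcases lt_or_ge t (((k : ℝ) + 1) / 2 ^ j) with h3 | h3
      · unfold haarW
        rw [if_neg (fun hc => absurd hc.2 (not_lt.mpr h2)), if_pos ⟨h2, h3⟩,
          if_pos h, if_pos h2, if_neg h3.not_ge]
        norm_num
      · unfold haarW
        rw [if_neg (fun hc => absurd hc.2 (not_lt.mpr h2)),
          if_neg (fun hc => absurd hc.2 (not_lt.mpr h3)), if_pos h, if_pos h2, if_pos h3]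
        norm_num

lemma haarR1_hasDerivWithinAt (j k : ℕ) (t : ℝ) :
    HasDerivWithinAt (haarR1 j k) (haarW j k t) (Set.Ioi t) t := by
  rw [haarW_eq]
  exact ((max_sub_hasDerivWithinAt _ t).sub
    ((max_sub_hasDerivWithinAt _ t).const_mul 2)).add (max_sub_hasDerivWithinAt _ t)

lemma haarR1_continuous (j k : ℕ) : Continuous (haarR1 j k) := by
  unfold haarR1
  fun_prop

lemma haarW_measurable (j k : ℕ) : Measurable (haarW j k) := by
  unfold haarW
  refine Measurable.ite ?_ measurable_const (Measurable.ite ?_ measurable_const measurable_const)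
  · exact (measurableSet_Ico : MeasurableSet (Ico ((k : ℝ) / 2 ^ j) (((k : ℝ) + 1 / 2) / 2 ^ j)))
  · exact (measurableSet_Ico : MeasurableSet (Ico (((k : ℝ) + 1 / 2) / 2 ^ j) (((k : ℝ) + 1) / 2 ^ j)))

lemma haarW_intervalIntegrable (j k : ℕ) (a b : ℝ) :
    IntervalIntegrable (haarW j k) volume a b := by
  rw [intervalIntegrable_iff]
  apply Measure.integrableOn_of_bounded (M := 1) (by simp [measure_lt_top] at *)
    ((haarW_measurable j k).aestronglyMeasurable)
  filter_upwards with x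
  unfold haarW
  split_ifs <;> norm_num

lemma haarR2_hasDerivAt (j k : ℕ) (t : ℝ) :
    HasDerivAt (haarR2 j k) (haarR1 j k t) t := by
  have h := (((sqMax_hasDerivAt ((k : ℝ) / 2 ^ j) t).sub
    ((sqMax_hasDerivAt (((k : ℝ) + 1 / 2) / 2 ^ j) t).const_mul 2)).add
    (sqMax_hasDerivAt (((k : ℝ) + 1) / 2 ^ j) t)).const_mul (1 / 2 : ℝ)
  have he : (1 / 2 : ℝ) * (2 * max (t - (k : ℝ) / 2 ^ j) 0
      - 2 * (2 * max (t - ((k : ℝ) + 1 / 2) / 2 ^ j) 0)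
      + 2 * max (t - ((k : ℝ) + 1) / 2 ^ j) 0) = haarR1 j k t := by
    unfold haarR1; ring
  rw [he] at h
  exact h

lemma haar_bound_aux (c h x : ℝ) (hhpos : 0 < h) :
    |(1 / 2 : ℝ) * ((max (x - c) 0) ^ 2 - 2 * (max (x - (c + h)) 0) ^ 2
      + (max (x - (c + 2 * h)) 0) ^ 2)| ≤ (8 / 3) * h ^ 2 := by
  rcases le_total x c with h1 | h1
  · rw [max_eq_right (by linarith), max_eq_right (by linarith), max_eq_right (by linarith)]
    simp
    positivity
  · rcases le_total x (c + h) with h2 | h2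
    · rw [max_eq_left (by linarith), max_eq_right (by linarith), max_eq_right (by linarith)]
      have he : (1 / 2 : ℝ) * ((x - c) ^ 2 - 2 * 0 ^ 2 + 0 ^ 2) = (1 / 2) * (x - c) ^ 2 := by
        ring
      rw [he, abs_of_nonneg (by positivity)]
      nlinarith [sq_nonneg (x - c), sq_nonneg h]
    · rcases le_total x (c + 2 * h) with h3 | h3
      · rw [max_eq_left (by linarith), max_eq_left (by linarith), max_eq_right (by linarith)]
        rw [abs_le]
        constructor
        · nlinarith [sq_nonneg (x - (c + h)), sq_nonneg h]
        · nlinarith [sq_nonneg (x - (c + h)), sq_nonneg h, sq_nonneg (x - c)]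
      · rw [max_eq_left (by linarith), max_eq_left (by linarith), max_eq_left (by linarith)]
        have he : (1 / 2 : ℝ) * ((x - c) ^ 2 - 2 * (x - (c + h)) ^ 2 + (x - (c + 2 * h)) ^ 2)
            = h ^ 2 := by ring
        rw [he, abs_of_nonneg (by positivity)]
        nlinarith [sq_nonneg h]

theorem haar_second_antiderivative_bound (j k : ℕ) (hk : k < 2 ^ j) :
    (∀ x ∈ Set.Icc (0:ℝ) 1,
        (∫ s in (0:ℝ)..x, ∫ r in (0:ℝ)..s, haarW j k r) = haarR2 j k x) ∧
      ∀ x ∈ Set.Icc (0:ℝ) 1, |haarR2 j k x| ≤ (8 / 3) * (1 / 2 ^ (j + 1)) ^ 2 := by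
  have hp : (0 : ℝ) < 2 ^ j := by positivity
  have hz1 : (0 : ℝ) ≤ (k : ℝ) / 2 ^ j := by positivity
  have hz2 : (0 : ℝ) ≤ ((k : ℝ) + 1 / 2) / 2 ^ j := by positivity
  have hz3 : (0 : ℝ) ≤ ((k : ℝ) + 1) / 2 ^ j := by positivity
  have hR10 : haarR1 j k 0 = 0 := by
    unfold haarR1
    rw [max_eq_right (by linarith), max_eq_right (by linarith), max_eq_right (by linarith)]
    ring
  have hR20 : haarR2 j k 0 = 0 := by
    unfold haarR2
    rw [max_eq_right (by linarith), max_eq_right (by linarith), max_eq_right (by linarith)]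
    ring
  constructor
  · intro x hx
    have hx0 : (0 : ℝ) ≤ x := hx.1
    have inner : ∀ s : ℝ, 0 ≤ s → (∫ r in (0:ℝ)..s, haarW j k r) = haarR1 j k s := by
      intro s hs
      have := integral_eq_sub_of_hasDeriv_right_of_le hs
        ((haarR1_continuous j k).continuousOn)
        (fun t _ => haarR1_hasDerivWithinAt j k t)
        (haarW_intervalIntegrable j k 0 s)
      rw [this, hR10, sub_zero]
    rw [intervalIntegral.integral_congr (g := haarR1 j k)
      (fun s hs => inner s (by
        rw [uIcc_of_le hx0] at hs; exact hs.1))]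
    have := integral_eq_sub_of_hasDerivAt (f := haarR2 j k) (f' := haarR1 j k)
      (fun t _ => haarR2_hasDerivAt j k t)
      ((haarR1_continuous j k).intervalIntegrable 0 x)
    rw [this, hR20, sub_zero]
  · intro x _
    have e2 : ((k : ℝ) + 1 / 2) / 2 ^ j = (k : ℝ) / 2 ^ j + 1 / 2 ^ (j + 1) := by
      rw [pow_succ]; field_simp
    have e3 : ((k : ℝ) + 1) / 2 ^ j = (k : ℝ) / 2 ^ j + 2 * (1 / 2 ^ (j + 1)) := by
      rw [pow_succ]; field_simp
    have := haar_bound_aux ((k : ℝ) / 2 ^ j) (1 / 2 ^ (j + 1)) x (by positivity)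
    unfold haarR2
    rw [e2, e3]
    exact this
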